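/- arXiv:0705.2932 — 5 statements merged into one kernel-verified Lean document; each statement's English description precedes it below -/
import Mathlib

section
/- For every natural number n, Σ_{λ ∈ P(n)} ℓ(λ) = Σ_{λ ∈ P(n)} (ℓ((λ^r)~) + ℓ(λ^e)), where the sums run over all partitions λ of n and (λ^r)~ denotes the 2-Glaisher image of the strict partition λ^r. -/
/-- `s` is (the multiset of parts of) a partition of `n`: all parts are positive and sum to `n`. -/
def IsPartitionOf (n : ℕ) (s : Multiset ℕ) : Prop :=
  (∀ x ∈ s, 0 < x) ∧ s.sum = n

/-- `λ^r`: the part `i` occurs once if its multiplicity in `s` is odd, and not at all otherwise. -/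
def rPart (s : Multiset ℕ) : Multiset ℕ :=
  s.dedup.filter (fun i => Odd (s.count i))

/-- `λ^d`: the part `i` occurs `⌊m_i(λ)/2⌋` times (i.e. `(m_i-1)/2` if `m_i` odd, `m_i/2` if even). -/
def dPart (s : Multiset ℕ) : Multiset ℕ :=
  ∑ i ∈ s.toFinset, Multiset.replicate (s.count i / 2) i

/-- `λ^o`: the odd parts of `λ`. -/
def oPart (s : Multiset ℕ) : Multiset ℕ :=
  s.filter (fun x => Odd x)

/-- `λ^e`: the halves of the even parts of `λ`. -/
def ePart (s : Multiset ℕ) : Multiset ℕ :=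
  (s.filter (fun x => Even x)).map (fun x => x / 2)

/-- The `p`-Glaisher map: each part `x = p^a * q` (with `p ∤ q`) is replaced by `p^a` copies of `q`. -/
def glaisher (p : ℕ) (s : Multiset ℕ) : Multiset ℕ :=
  s.bind (fun x => Multiset.replicate (p ^ (Nat.factorization x p)) (x / p ^ (Nat.factorization x p)))

/-- `λ^{r(p)}`: the part `i` occurs `m_i(λ) mod p` times. -/
def rPartP (p : ℕ) (s : Multiset ℕ) : Multiset ℕ :=
  ∑ i ∈ s.toFinset, Multiset.replicate (s.count i % p) i

/-- `λ^{d(p)}`: the part `i` occurs `(m_i(λ) - (m_i(λ) mod p))/p` times. -/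
def dPartP (p : ℕ) (s : Multiset ℕ) : Multiset ℕ :=
  ∑ i ∈ s.toFinset, Multiset.replicate (s.count i / p) i

section Aux

lemma count_rPart (s : Multiset ℕ) (i : ℕ) : (rPart s).count i = s.count i % 2 := by
  rw [rPart, Multiset.count_filter]
  by_cases hm : i ∈ s
  · by_cases h : Odd (s.count i)
    · rw [if_pos h, Multiset.count_dedup, if_pos hm, (Nat.odd_iff.mp h)]
    · rw [if_neg h]
      rw [Nat.odd_iff] at h
      omega
  · have h0 : s.count i = 0 := Multiset.count_eq_zero_of_notMem hm
    rw [h0]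
    simp [h0]

lemma count_dPart (s : Multiset ℕ) (i : ℕ) : (dPart s).count i = s.count i / 2 := by
  rw [dPart, Multiset.count_sum']
  by_cases hm : i ∈ s.toFinset
  · rw [Finset.sum_eq_single i
      (fun b _ hb => by rw [Multiset.count_replicate, if_neg hb])
      (fun h => absurd hm h)]
    rw [Multiset.count_replicate, if_pos rfl]
  · rw [Finset.sum_eq_zero (fun b hb => by
      rw [Multiset.count_replicate, if_neg ?_]
      rintro rfl; exact hm hb)]
    have h0 : s.count i = 0 := by
      rw [Multiset.count_eq_zero]
      exact fun h => hm (Multiset.mem_toFinset.mpr h)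
    omega

lemma rPart_add_dPart (s : Multiset ℕ) : rPart s + (dPart s + dPart s) = s := by
  ext i
  simp only [Multiset.count_add, count_rPart, count_dPart]
  omega

lemma mem_rPart {s : Multiset ℕ} {x : ℕ} (hx : x ∈ rPart s) : x ∈ s := by
  rw [rPart, Multiset.mem_filter, Multiset.mem_dedup] at hx
  exact hx.1

lemma nodup_rPart (s : Multiset ℕ) : (rPart s).Nodup :=
  (Multiset.nodup_dedup s).filter _

lemma mem_dPart {s : Multiset ℕ} {x : ℕ} (hx : x ∈ dPart s) : x ∈ s := by
  rw [dPart] at hx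
  rw [Multiset.mem_sum] at hx
  obtain ⟨i, hi, hxi⟩ := hx
  rw [Multiset.eq_of_mem_replicate hxi]
  exact Multiset.mem_toFinset.mp hi

lemma glaisher_sum (s : Multiset ℕ) : (glaisher 2 s).sum = s.sum := by
  rw [glaisher]
  induction s using Multiset.induction with
  | empty => simp
  | cons a s ih =>
    rw [Multiset.cons_bind, Multiset.sum_add, ih, Multiset.sum_cons, Multiset.sum_replicate,
      smul_eq_mul, Nat.mul_div_cancel' (Nat.ordProj_dvd a 2)]

lemma glaisher_odd {s : Multiset ℕ} (hs : ∀ x ∈ s, 0 < x) : ∀ y ∈ glaisher 2 s, Odd y := by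
  intro y hy
  rw [glaisher, Multiset.mem_bind] at hy
  obtain ⟨x, hx, hy⟩ := hy
  rw [Multiset.eq_of_mem_replicate hy]
  have h2 := Nat.not_dvd_ordCompl Nat.prime_two (hs x hx).ne'
  rw [Nat.odd_iff]
  omega

lemma sum_map_two_mul (d : Multiset ℕ) : (d.map (fun x => 2 * x)).sum = 2 * d.sum := by
  induction d using Multiset.induction with
  | empty => simp
  | cons a s ih => simp [ih, Nat.mul_add]

lemma sum_range_two_pow (n : ℕ) : ∑ i ∈ Finset.range n, 2 ^ i = 2 ^ n - 1 := by
  induction n with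
  | zero => simp
  | succ n ih =>
    rw [Finset.sum_range_succ, ih, pow_succ]
    have := Nat.one_le_two_pow (n := n)
    omega

lemma testBit_sum_two_pow (S : Finset ℕ) (k : ℕ) :
    Nat.testBit (∑ p ∈ S, 2 ^ p) k = true ↔ k ∈ S := by
  induction S using Finset.induction_on_max with
  | empty => simp
  | insert a S ha ih =>
    have hS : ∑ p ∈ S, 2 ^ p < 2 ^ a := by
      have h1 : ∑ p ∈ S, 2 ^ p ≤ ∑ p ∈ Finset.range a, 2 ^ p :=
        Finset.sum_le_sum_of_subset (fun x hx => Finset.mem_range.mpr (ha x hx))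
      rw [sum_range_two_pow] at h1
      have := Nat.one_le_two_pow (n := a)
      omega
    rw [Finset.sum_insert (fun h => absurd (ha a h) (lt_irrefl a)), Finset.mem_insert]
    rcases lt_trichotomy k a with hk | rfl | hk
    · rw [Nat.testBit_two_pow_add_gt hk, ih]
      constructor
      · exact Or.inr
      · rintro (rfl | h)
        · exact absurd hk (lt_irrefl k)
        · exact h
    · rw [Nat.testBit_two_pow_add_eq, Nat.testBit_eq_false_of_lt hS]
      simp
    · have hlt : 2 ^ a + ∑ p ∈ S, 2 ^ p < 2 ^ k := by
        calc 2 ^ a + ∑ p ∈ S, 2 ^ p < 2 ^ a + 2 ^ a := by omega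
        _ = 2 ^ (a + 1) := by ring
        _ ≤ 2 ^ k := Nat.pow_le_pow_right (by norm_num) hk
      rw [Nat.testBit_eq_false_of_lt hlt]
      simp only [Bool.false_eq_true, false_iff]
      rintro (rfl | h)
      · exact absurd hk (lt_irrefl k)
      · exact absurd (ha k h) (by omega)

lemma count_glaisher_eq {s : Multiset ℕ} (hs : s.Nodup) (hpos : ∀ x ∈ s, 0 < x) (q : ℕ) :
    (glaisher 2 s).count q =
      ∑ p ∈ (s.toFinset.filter
          (fun b => b / 2 ^ Nat.factorization b 2 = q)).image
          (fun b => Nat.factorization b 2), 2 ^ p := by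
  rw [glaisher, Multiset.count_bind]
  have hval : s.toFinset.val = s := by
    rw [Multiset.toFinset_val, Multiset.dedup_eq_self.mpr hs]
  rw [Finset.sum_image]
  · rw [Finset.sum_filter]
    rw [Finset.sum_eq_multiset_sum, hval]
    congr 1
    apply Multiset.map_congr rfl
    intro b _
    rw [Multiset.count_replicate]
  · intro b1 h1 b2 h2 hv
    simp only [Finset.mem_coe, Finset.mem_filter, Multiset.mem_toFinset] at h1 h2
    have e1 : b1 = q * 2 ^ Nat.factorization b1 2 := by
      rw [← h1.2, Nat.div_mul_cancel (Nat.ordProj_dvd b1 2)]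
    have e2 : b2 = q * 2 ^ Nat.factorization b2 2 := by
      rw [← h2.2, Nat.div_mul_cancel (Nat.ordProj_dvd b2 2)]
    rw [e1, e2]; exact congrArg (fun t => q * 2 ^ t) hv

lemma testBit_count_glaisher {s : Multiset ℕ} (hs : s.Nodup) (hpos : ∀ x ∈ s, 0 < x)
    {x : ℕ} (hx : 0 < x) :
    Nat.testBit ((glaisher 2 s).count (x / 2 ^ Nat.factorization x 2))
      (Nat.factorization x 2) = true ↔ x ∈ s := by
  rw [count_glaisher_eq hs hpos, testBit_sum_two_pow, Finset.mem_image]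
  constructor
  · rintro ⟨b, hb, hvb⟩
    simp only [Finset.mem_filter, Multiset.mem_toFinset] at hb
    have : b = x := by
      have e1 : b = (x / 2 ^ Nat.factorization x 2) * 2 ^ Nat.factorization b 2 := by
        rw [← hb.2, Nat.div_mul_cancel (Nat.ordProj_dvd b 2)]
      rw [e1, hvb, Nat.div_mul_cancel (Nat.ordProj_dvd x 2)]
    rw [← this]; exact hb.1
  · intro hxs
    exact ⟨x, Finset.mem_filter.mpr ⟨Multiset.mem_toFinset.mpr hxs, rfl⟩, rfl⟩

lemma glaisher_injOn {s t : Multiset ℕ} (hs : s.Nodup) (ht : t.Nodup)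
    (hspos : ∀ x ∈ s, 0 < x) (htpos : ∀ x ∈ t, 0 < x)
    (h : glaisher 2 s = glaisher 2 t) : s = t := by
  rw [Multiset.Nodup.ext hs ht]
  intro a
  constructor
  · intro has
    have hapos := hspos a has
    rw [← testBit_count_glaisher hs hspos hapos, h,
      testBit_count_glaisher ht htpos hapos] at has
    exact has
  · intro hat
    have hapos := htpos a hat
    rw [← testBit_count_glaisher ht htpos hapos, ← h,
      testBit_count_glaisher hs hspos hapos] at hat
    exact hat

/-- The bijection `λ ↦ (λ^r)~ ∪ 2·λ^d` on partitions of `n`. -/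
def psi {n : ℕ} (μ : Nat.Partition n) : Nat.Partition n where
  parts := glaisher 2 (rPart μ.parts) + (dPart μ.parts).map (fun x => 2 * x)
  parts_pos := by
    intro i hi
    rw [Multiset.mem_add] at hi
    rcases hi with hi | hi
    · have := glaisher_odd (fun x hx => μ.parts_pos (mem_rPart hx)) i hi
      rcases this with ⟨k, hk⟩
      omega
    · rw [Multiset.mem_map] at hi
      obtain ⟨x, hx, rfl⟩ := hi
      have := μ.parts_pos (mem_dPart hx)
      omega
  parts_sum := by
    rw [Multiset.sum_add, glaisher_sum, sum_map_two_mul]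
    have h := congrArg Multiset.sum (rPart_add_dPart μ.parts)
    rw [Multiset.sum_add, Multiset.sum_add, μ.parts_sum] at h
    omega

lemma oPart_psi {n : ℕ} (μ : Nat.Partition n) :
    oPart (psi μ).parts = glaisher 2 (rPart μ.parts) := by
  show Multiset.filter _ (glaisher 2 (rPart μ.parts) + (dPart μ.parts).map (fun x => 2 * x)) = _
  rw [Multiset.filter_add,
    Multiset.filter_eq_self.mpr (glaisher_odd (fun x hx => μ.parts_pos (mem_rPart hx))),
    Multiset.filter_eq_nil.mpr ?_, add_zero]
  intro a ha
  rw [Multiset.mem_map] at ha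
  obtain ⟨x, _, rfl⟩ := ha
  rw [Nat.odd_iff]
  omega

lemma ePartFilter_psi {n : ℕ} (μ : Nat.Partition n) :
    Multiset.filter (fun x => Even x) (psi μ).parts = (dPart μ.parts).map (fun x => 2 * x) := by
  show Multiset.filter _ (glaisher 2 (rPart μ.parts) + (dPart μ.parts).map (fun x => 2 * x)) = _
  rw [Multiset.filter_add,
    Multiset.filter_eq_nil.mpr ?_,
    Multiset.filter_eq_self.mpr ?_, zero_add]
  · intro a ha
    rw [Multiset.mem_map] at ha
    obtain ⟨x, _, rfl⟩ := ha
    exact ⟨x, by ring⟩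
  · intro a ha
    have := glaisher_odd (fun x hx => μ.parts_pos (mem_rPart hx)) a ha
    rw [Nat.even_iff]
    rw [Nat.odd_iff] at this
    omega

lemma psi_injective (n : ℕ) : Function.Injective (psi (n := n)) := by
  intro μ ν h
  have hp : (psi μ).parts = (psi ν).parts := by rw [h]
  have ho : glaisher 2 (rPart μ.parts) = glaisher 2 (rPart ν.parts) := by
    rw [← oPart_psi, ← oPart_psi, hp]
  have he : (dPart μ.parts).map (fun x => 2 * x) = (dPart ν.parts).map (fun x => 2 * x) := by
    rw [← ePartFilter_psi, ← ePartFilter_psi, hp]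
  have hd : dPart μ.parts = dPart ν.parts :=
    Multiset.map_injective (fun a b hab => by omega) he
  have hr : rPart μ.parts = rPart ν.parts :=
    glaisher_injOn (nodup_rPart _) (nodup_rPart _)
      (fun x hx => μ.parts_pos (mem_rPart hx))
      (fun x hx => ν.parts_pos (mem_rPart hx)) ho
  have : μ.parts = ν.parts := by
    rw [← rPart_add_dPart μ.parts, ← rPart_add_dPart ν.parts, hr, hd]
  cases μ; cases ν; simpa using this

lemma card_split (s : Multiset ℕ) :
    Multiset.card s = (oPart s).card + (ePart s).card := by
  rw [oPart, ePart, Multiset.card_map]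
  have hfe : Multiset.filter (fun x => Even x) s
      = Multiset.filter (fun x => ¬ Odd x) s := by
    apply Multiset.filter_congr
    intro x _
    exact (Nat.not_odd_iff_even).symm
  rw [hfe, ← Multiset.card_add, Multiset.filter_add_not]

end Aux

/-- `Σ_{λ ∈ P(n)} ℓ(λ) = Σ_{λ ∈ P(n)} (ℓ((λ^r)~) + ℓ(λ^e))`, where `(λ^r)~` is the
2-Glaisher image of the strict partition `λ^r`. -/
theorem stmt5 (n : ℕ) :
    ∑ μ : Nat.Partition n, Multiset.card μ.parts =
      ∑ μ : Nat.Partition n, ((glaisher 2 (rPart μ.parts)).card + (ePart μ.parts).card) := by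
  have hbij : Function.Bijective (psi (n := n)) :=
    Finite.injective_iff_bijective.mp (psi_injective n)
  calc ∑ μ : Nat.Partition n, Multiset.card μ.parts
      = ∑ μ : Nat.Partition n, ((oPart μ.parts).card + (ePart μ.parts).card) :=
        Finset.sum_congr rfl (fun μ _ => card_split μ.parts)
    _ = (∑ μ : Nat.Partition n, (oPart μ.parts).card)
        + ∑ μ : Nat.Partition n, (ePart μ.parts).card := Finset.sum_add_distrib
    _ = (∑ μ : Nat.Partition n, (oPart (psi μ).parts).card)
        + ∑ μ : Nat.Partition n, (ePart μ.parts).card := by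
        rw [hbij.sum_comp (fun ν => (oPart ν.parts).card)]
    _ = ∑ μ : Nat.Partition n, ((glaisher 2 (rPart μ.parts)).card + (ePart μ.parts).card) := by
        rw [← Finset.sum_add_distrib]
        exact Finset.sum_congr rfl (fun μ _ => by rw [oPart_psi])
end

section
/- For every natural number n, Σ_{λ ∈ P(n)} ℓ(λ^d) = Σ_{λ ∈ P(n)} (ℓ((λ^r)~) − ℓ(λ^r)), where the sums run over all partitions λ of n and (λ^r)~ denotes the 2-Glaisher image of the strict partition λ^r. (This common value is the exponent k_n for which the determinant of the transition matrix A_n satisfies |det A_n| = 2^{k_n}.) -/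
namespace Stmt12Aux

open Finset

/-- The number of partitions of `m`, as an integer. -/
def pc (m : ℕ) : ℤ := (Fintype.card (Nat.Partition m) : ℤ)

/-- `c n m = p(n - m)` if `m ≤ n`, else `0`. -/
def c (n m : ℕ) : ℤ := if m ≤ n then pc (n - m) else 0

lemma c_vanish {n m : ℕ} (h : n < m) : c n m = 0 := if_neg (by omega)

lemma sum_mono {s t : Multiset ℕ} (h : s ≤ t) : s.sum ≤ t.sum := by
  obtain ⟨u, rfl⟩ := Multiset.le_iff_exists_add.mp h
  simp

lemma count_le {n : ℕ} (p : Nat.Partition n) (i : ℕ) : p.parts.count i ≤ n :=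
  calc p.parts.count i ≤ Multiset.card p.parts := Multiset.count_le_card _ _
  _ ≤ p.parts.sum := by simpa using Multiset.card_nsmul_le_sum (fun x hx => p.parts_pos hx)
  _ = n := p.parts_sum

lemma toFinset_subset {n : ℕ} (p : Nat.Partition n) : p.parts.toFinset ⊆ Icc 1 n := by
  intro i hi
  rw [Multiset.mem_toFinset] at hi
  have h1 : 0 < i := p.parts_pos hi
  have h2 : i ≤ n := by
    have := Multiset.le_sum_of_mem hi
    rw [p.parts_sum] at this
    omega
  simp [Finset.mem_Icc]; omega

/-- Removing `t` copies of `i` is a bijection between partitions of `n` with at least `t`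
copies of `i` and partitions of `n - t*i`. -/
def subEquiv (n i t : ℕ) (hi : 0 < i) (h : t * i ≤ n) :
    {μ : Nat.Partition n // t ≤ μ.parts.count i} ≃ Nat.Partition (n - t * i) where
  toFun μ :=
    { parts := μ.1.parts - Multiset.replicate t i
      parts_pos := fun hj => μ.1.parts_pos (Multiset.mem_of_le (Multiset.sub_le_self _ _) hj)
      parts_sum := by
        have hle := Multiset.le_count_iff_replicate_le.mp μ.2
        have h2 : (μ.1.parts - Multiset.replicate t i).sum + (Multiset.replicate t i).sum
            = μ.1.parts.sum := by
          rw [← Multiset.sum_add, tsub_add_cancel_of_le hle]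
        rw [Multiset.sum_replicate, μ.1.parts_sum] at h2
        simp at h2
        omega }
  invFun ν :=
    ⟨{  parts := ν.parts + Multiset.replicate t i
        parts_pos := fun hj => by
          rcases Multiset.mem_add.mp hj with h' | h'
          · exact ν.parts_pos h'
          · rw [Multiset.eq_of_mem_replicate h']; exact hi
        parts_sum := by
          rw [Multiset.sum_add, Multiset.sum_replicate, ν.parts_sum]
          simp
          omega },
      by simp [Multiset.count_add, Multiset.count_replicate]⟩
  left_inv μ := by
    apply Subtype.ext
    apply Nat.Partition.ext
    exact tsub_add_cancel_of_le (Multiset.le_count_iff_replicate_le.mp μ.2)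
  right_inv ν := by
    apply Nat.Partition.ext
    simp

/-- The number of partitions of `n` with at least `t` copies of the part `i` is `c n (t*i)`. -/
lemma key (n i t : ℕ) (hi : 0 < i) (ht : 0 < t) :
    ∑ μ : Nat.Partition n, (if t ≤ μ.parts.count i then (1:ℤ) else 0) = c n (t * i) := by
  classical
  rw [Finset.sum_boole]
  by_cases h : t * i ≤ n
  · rw [c, if_pos h, pc]
    congr 1
    rw [← Fintype.card_subtype]
    exact Fintype.card_congr (subEquiv n i t hi h)
  · rw [c, if_neg h]
    norm_num
    intro μ
    by_contra hc
    push_neg at hc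
    apply h
    have hle := Multiset.le_count_iff_replicate_le.mp hc
    have := sum_mono hle
    rw [Multiset.sum_replicate, μ.parts_sum] at this
    simpa using this

lemma card_finsetSum (s : Finset ℕ) (f : ℕ → Multiset ℕ) :
    Multiset.card (∑ i ∈ s, f i) = ∑ i ∈ s, Multiset.card (f i) := by
  classical
  induction s using Finset.induction with
  | empty => simp
  | insert _ _ h ih => simp [Finset.sum_insert h, ih]

lemma divIndicator (n m : ℕ) (hm : m ≤ n) :
    ((m / 2 : ℕ) : ℤ) = ∑ k ∈ Icc 1 n, (if 2 * k ≤ m then (1:ℤ) else 0) := by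
  rw [Finset.sum_boole]
  have : (Icc 1 n).filter (fun k => 2 * k ≤ m) = Icc 1 (m / 2) := by
    ext k
    simp only [Finset.mem_filter, Finset.mem_Icc]
    omega
  rw [this]
  simp

lemma oddAlt (m : ℕ) :
    (∑ t ∈ Icc 1 m, (-1:ℤ)^(t+1)) = if Odd m then 1 else 0 := by
  induction m with
  | zero => simp
  | succ m ih =>
    rw [Finset.sum_Icc_succ_top (by omega), ih]
    have h2 : (-1:ℤ)^(m+1+1) = (-1)^m := by
      rw [pow_succ, pow_succ]; ring
    rw [h2]
    rcases Nat.even_or_odd m with he | ho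
    · rw [he.neg_one_pow, if_neg (Nat.not_odd_iff_even.mpr he), if_pos he.add_one]
      norm_num
    · rw [ho.neg_one_pow, if_pos ho, if_neg (Nat.not_odd_iff_even.mpr (Odd.add_one ho))]
      norm_num

lemma oddIndicator (n m : ℕ) (hm : m ≤ n) :
    (if Odd m then (1:ℤ) else 0) = ∑ t ∈ Icc 1 n, (if t ≤ m then (-1:ℤ)^(t+1) else 0) := by
  rw [← Finset.sum_filter]
  have : (Icc 1 n).filter (fun t => t ≤ m) = Icc 1 m := by
    ext t
    simp only [Finset.mem_filter, Finset.mem_Icc]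
    omega
  rw [this, oddAlt]

lemma geomIcc (v : ℕ) : (∑ a ∈ Icc 1 v, (2:ℤ)^(a-1)) = 2^v - 1 := by
  induction v with
  | zero => simp
  | succ v ih =>
    rw [Finset.sum_Icc_succ_top (by omega), ih]
    have : (2:ℤ)^(v+1) = 2^v * 2 := pow_succ 2 v
    simp only [Nat.add_sub_cancel]
    omega

lemma powIndicator (n i : ℕ) (h1 : 1 ≤ i) (h2 : i ≤ n) :
    (2:ℤ)^((Nat.factorization i) 2) - 1
      = ∑ a ∈ Icc 1 n, (if 2^a ∣ i then (2:ℤ)^(a-1) else 0) := by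
  set v := (Nat.factorization i) 2 with hv
  have hvn : v ≤ n := by
    have hdvd : 2^v ∣ i := Nat.ordProj_dvd i 2
    have := Nat.le_of_dvd (by omega) hdvd
    have := Nat.lt_two_pow_self (n := v)
    omega
  rw [← Finset.sum_filter]
  have hfil : (Icc 1 n).filter (fun a => 2^a ∣ i) = Icc 1 v := by
    ext a
    simp only [Finset.mem_filter, Finset.mem_Icc]
    constructor
    · rintro ⟨⟨ha1, _⟩, hdvd⟩
      exact ⟨ha1, (Nat.Prime.pow_dvd_iff_le_factorization Nat.prime_two (by omega)).mp hdvd⟩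
    · rintro ⟨ha1, hav⟩
      exact ⟨⟨ha1, by omega⟩,
        (Nat.Prime.pow_dvd_iff_le_factorization Nat.prime_two (by omega)).mpr hav⟩
  rw [hfil, geomIcc]

lemma dPart_card (s : Multiset ℕ) :
    ((dPart s).card : ℤ) = ∑ i ∈ s.toFinset, ((s.count i / 2 : ℕ) : ℤ) := by
  rw [dPart, card_finsetSum]
  push_cast
  simp [Multiset.card_replicate]

lemma rPart_eq (s : Multiset ℕ) :
    rPart s = (s.toFinset.filter (fun i => Odd (s.count i))).val := rfl

lemma rPart_card (s : Multiset ℕ) :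
    ((rPart s).card : ℤ) = ∑ _i ∈ s.toFinset.filter (fun i => Odd (s.count i)), (1:ℤ) := by
  rw [rPart_eq]
  simp [Finset.card_def]

lemma glaisher_card_nat (s : Multiset ℕ) :
    (glaisher 2 (rPart s)).card
      = ∑ i ∈ s.toFinset.filter (fun i => Odd (s.count i)), 2^((Nat.factorization i) 2) := by
  rw [glaisher, Multiset.card_bind, rPart_eq, Finset.sum_eq_multiset_sum]
  congr 1
  apply Multiset.map_congr rfl
  intro x _
  simp [Multiset.card_replicate]

lemma glaisher_card (s : Multiset ℕ) :
    ((glaisher 2 (rPart s)).card : ℤ)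
      = ∑ i ∈ s.toFinset.filter (fun i => Odd (s.count i)), (2:ℤ)^((Nat.factorization i) 2) := by
  rw [glaisher_card_nat]
  push_cast
  rfl

lemma perA (n : ℕ) (μ : Nat.Partition n) :
    ((dPart μ.parts).card : ℤ)
      = ∑ i ∈ Icc 1 n, ∑ k ∈ Icc 1 n, (if 2 * k ≤ μ.parts.count i then (1:ℤ) else 0) := by
  rw [dPart_card]
  rw [Finset.sum_congr rfl (fun i _ => divIndicator n _ (count_le μ i))]
  apply Finset.sum_subset (toFinset_subset μ)
  intro i _ hnot
  have hc : μ.parts.count i = 0 := by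
    rw [Multiset.count_eq_zero]
    intro hmem
    exact hnot (Multiset.mem_toFinset.mpr hmem)
  apply Finset.sum_eq_zero
  intro k hk
  rw [Finset.mem_Icc] at hk
  rw [if_neg (by omega)]

lemma perB (n : ℕ) (μ : Nat.Partition n) :
    ((glaisher 2 (rPart μ.parts)).card : ℤ) - ((rPart μ.parts).card : ℤ)
      = ∑ i ∈ Icc 1 n,
          (if Odd (μ.parts.count i) then (2:ℤ)^((Nat.factorization i) 2) - 1 else 0) := by
  rw [glaisher_card, rPart_card, ← Finset.sum_sub_distrib, Finset.sum_filter]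
  apply Finset.sum_subset (toFinset_subset μ)
  intro i _ hnot
  have hc : μ.parts.count i = 0 := by
    rw [Multiset.count_eq_zero]
    intro hmem
    exact hnot (Multiset.mem_toFinset.mpr hmem)
  rw [hc]
  simp [Nat.odd_iff]

/-- `S i = Σ_k c(k i)`. -/
def Sf (n i : ℕ) : ℤ := ∑ k ∈ Icc 1 n, c n (k * i)

/-- `F i = Σ_t (-1)^{t+1} c(t i)`. -/
def Ff (n i : ℕ) : ℤ := ∑ t ∈ Icc 1 n, (-1:ℤ)^(t+1) * c n (t * i)

lemma Sf_vanish {n i : ℕ} (h : n < i) : Sf n i = 0 := by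
  apply Finset.sum_eq_zero
  intro k hk
  rw [Finset.mem_Icc] at hk
  apply c_vanish
  have : i ≤ k * i := Nat.le_mul_of_pos_left i (by omega)
  omega

lemma Ff_vanish {n i : ℕ} (h : n < i) : Ff n i = 0 := by
  apply Finset.sum_eq_zero
  intro t ht
  rw [Finset.mem_Icc] at ht
  have : i ≤ t * i := Nat.le_mul_of_pos_left i (by omega)
  rw [c_vanish (by omega)]
  ring

lemma reindex (n d : ℕ) (hd : 0 < d) (g : ℕ → ℤ) (hg : ∀ m, n < m → g m = 0) :
    ∑ i ∈ (Icc 1 n).filter (fun i => d ∣ i), g i = ∑ j ∈ Icc 1 n, g (d * j) := by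
  have h1 : ∑ j ∈ (Icc 1 n).filter (fun j => d * j ≤ n), g (d * j)
      = ∑ j ∈ Icc 1 n, g (d * j) := by
    apply Finset.sum_subset (Finset.filter_subset _ _)
    intro j hj hnot
    rw [Finset.mem_filter] at hnot
    apply hg
    push_neg at hnot
    exact hnot hj
  rw [← h1]
  apply Finset.sum_nbij' (i := fun a => a / d) (j := fun b => d * b)
  · intro a ha
    rw [Finset.mem_filter, Finset.mem_Icc] at ha
    obtain ⟨⟨ha1, ha2⟩, hdvd⟩ := ha
    rw [Finset.mem_filter, Finset.mem_Icc]
    have hda : d ≤ a := Nat.le_of_dvd (by omega) hdvd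
    refine ⟨⟨?_, ?_⟩, ?_⟩
    · exact (Nat.one_le_div_iff hd).mpr hda
    · exact le_trans (Nat.div_le_self a d) ha2
    · rw [Nat.mul_div_cancel' hdvd]; exact ha2
  · intro b hb
    rw [Finset.mem_filter, Finset.mem_Icc] at hb
    obtain ⟨⟨hb1, _⟩, hbn⟩ := hb
    rw [Finset.mem_filter, Finset.mem_Icc]
    refine ⟨⟨?_, ?_⟩, Dvd.intro b rfl⟩
    · exact Nat.one_le_iff_ne_zero.mpr (by positivity)
    · omega
  · intro a ha
    rw [Finset.mem_filter] at ha
    exact Nat.mul_div_cancel' ha.2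
  · intro b _
    exact Nat.mul_div_cancel_left b hd
  · intro a ha
    rw [Finset.mem_filter] at ha
    rw [Nat.mul_div_cancel' ha.2]

lemma Ff_eq (n i : ℕ) (hi : 0 < i) : Ff n i = Sf n i - 2 * Sf n (2 * i) := by
  have h1 : ∀ t : ℕ, (-1:ℤ)^(t+1) * c n (t*i)
      = c n (t*i) - (if 2 ∣ t then 2 * c n (t*i) else 0) := by
    intro t
    rcases Nat.even_or_odd t with he | ho
    · rw [if_pos he.two_dvd, (he.add_one).neg_one_pow]
      ring
    · rw [if_neg (by have := Nat.odd_iff.mp ho; omega), (ho.add_one).neg_one_pow]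
      ring
  rw [Ff, Finset.sum_congr rfl (fun t _ => h1 t), Finset.sum_sub_distrib]
  have h2 : ∑ t ∈ Icc 1 n, (if 2 ∣ t then 2 * c n (t * i) else 0)
      = 2 * Sf n (2 * i) := by
    rw [← Finset.sum_filter, ← Finset.mul_sum]
    congr 1
    rw [reindex n 2 (by omega) (fun m => c n (m * i))
      (fun m hm => c_vanish (by have : m ≤ m * i := Nat.le_mul_of_pos_right m (by omega); omega))]
    apply Finset.sum_congr rfl
    intro j _
    congr 1
    ring
  rw [h2]
  rfl

end Stmt12Aux

open Finset Stmt12Aux in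
/-- `k_n = Σ_{λ ∈ P(n)} ℓ(λ^d) = Σ_{λ ∈ P(n)} (ℓ((λ^r)~) − ℓ(λ^r))`, where `(λ^r)~` is the
2-Glaisher image of `λ^r`. -/
theorem stmt12 (n : ℕ) :
    ∑ μ : Nat.Partition n, ((dPart μ.parts).card : ℤ) =
      ∑ μ : Nat.Partition n,
        (((glaisher 2 (rPart μ.parts)).card : ℤ) - ((rPart μ.parts).card : ℤ)) := by
  classical
  have hL : ∑ μ : Nat.Partition n, ((dPart μ.parts).card : ℤ)
      = ∑ j ∈ Icc 1 n, Sf n (2 * j) := by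
    rw [Finset.sum_congr rfl (fun μ _ => perA n μ), Finset.sum_comm]
    apply Finset.sum_congr rfl
    intro i hi
    rw [Finset.mem_Icc] at hi
    rw [Finset.sum_comm, Sf]
    apply Finset.sum_congr rfl
    intro k hk
    rw [Finset.mem_Icc] at hk
    rw [key n i (2 * k) (by omega) (by omega)]
    congr 1
    ring
  have hR : ∑ μ : Nat.Partition n,
        (((glaisher 2 (rPart μ.parts)).card : ℤ) - ((rPart μ.parts).card : ℤ))
      = ∑ i ∈ Icc 1 n, ((2:ℤ)^((Nat.factorization i) 2) - 1) * Ff n i := by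
    rw [Finset.sum_congr rfl (fun μ _ => perB n μ), Finset.sum_comm]
    apply Finset.sum_congr rfl
    intro i hi
    rw [Finset.mem_Icc] at hi
    have step : ∀ μ : Nat.Partition n,
        (if Odd (μ.parts.count i) then (2:ℤ)^((Nat.factorization i) 2) - 1 else 0)
          = ((2:ℤ)^((Nat.factorization i) 2) - 1) * (if Odd (μ.parts.count i) then 1 else 0) := by
      intro μ; split <;> ring
    rw [Finset.sum_congr rfl (fun μ _ => step μ), ← Finset.mul_sum]
    congr 1
    rw [Finset.sum_congr rfl (fun μ _ => oddIndicator n _ (count_le μ i)), Finset.sum_comm, Ff]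
    apply Finset.sum_congr rfl
    intro t ht
    rw [Finset.mem_Icc] at ht
    have step2 : ∀ μ : Nat.Partition n,
        (if t ≤ μ.parts.count i then (-1:ℤ)^(t+1) else 0)
          = (-1:ℤ)^(t+1) * (if t ≤ μ.parts.count i then 1 else 0) := by
      intro μ; split <;> ring
    rw [Finset.sum_congr rfl (fun μ _ => step2 μ), ← Finset.mul_sum,
      key n i t (by omega) (by omega)]
  have hR2 : ∑ i ∈ Icc 1 n, ((2:ℤ)^((Nat.factorization i) 2) - 1) * Ff n i
      = ∑ a ∈ Icc 1 n, (2:ℤ)^(a-1) * ∑ j ∈ Icc 1 n, Ff n (2^a * j) := by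
    rw [Finset.sum_congr rfl
      (fun i hi => by
        rw [powIndicator n i (Finset.mem_Icc.mp hi).1 (Finset.mem_Icc.mp hi).2])]
    have step : ∀ i ∈ Icc 1 n,
        (∑ a ∈ Icc 1 n, (if 2^a ∣ i then (2:ℤ)^(a-1) else 0)) * Ff n i
          = ∑ a ∈ Icc 1 n, (if 2^a ∣ i then (2:ℤ)^(a-1) * Ff n i else 0) := by
      intro i _
      rw [Finset.sum_mul]
      apply Finset.sum_congr rfl
      intro a _
      rw [ite_mul, zero_mul]
    rw [Finset.sum_congr rfl step, Finset.sum_comm]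
    apply Finset.sum_congr rfl
    intro a ha
    rw [← Finset.sum_filter, ← Finset.mul_sum]
    congr 1
    exact reindex n (2^a) (Nat.pow_pos (n := a) (by omega)) (Ff n) (fun m hm => Ff_vanish hm)
  have hTel : ∑ a ∈ Icc 1 n, (2:ℤ)^(a-1) * ∑ j ∈ Icc 1 n, Ff n (2^a * j)
      = ∑ j ∈ Icc 1 n, Sf n (2 * j) := by
    set T : ℕ → ℤ := fun a => ∑ j ∈ Icc 1 n, Sf n (2^a * j) with hT
    have hFf : ∀ a ∈ Icc 1 n, (2:ℤ)^(a-1) * ∑ j ∈ Icc 1 n, Ff n (2^a * j)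
        = 2^(a-1) * T a - 2^a * T (a+1) := by
      intro a ha
      rw [Finset.mem_Icc] at ha
      have hsum : ∑ j ∈ Icc 1 n, Ff n (2^a * j) = T a - 2 * T (a+1) := by
        rw [hT]
        simp only
        rw [Finset.mul_sum, ← Finset.sum_sub_distrib]
        apply Finset.sum_congr rfl
        intro j hj
        rw [Finset.mem_Icc] at hj
        rw [Ff_eq n (2^a * j) (Nat.mul_pos (Nat.pow_pos (n := a) (by omega)) (by omega))]
        congr 2
        ring
      rw [hsum, mul_sub]
      congr 1
      rw [← mul_assoc]
      congr 1
      rw [← pow_succ]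
      congr 1
      omega
    rw [Finset.sum_congr rfl hFf]
    have hTzero : T (n + 1) = 0 := by
      rw [hT]
      apply Finset.sum_eq_zero
      intro j hj
      rw [Finset.mem_Icc] at hj
      apply Sf_vanish
      have h1 : n < 2^(n+1) := by
        calc n < 2^n := Nat.lt_two_pow_self (n := n)
        _ ≤ 2^(n+1) := Nat.pow_le_pow_right (by omega) (by omega)
      have h2 : 2^(n+1) ≤ 2^(n+1) * j := Nat.le_mul_of_pos_right _ (by omega)
      omega
    have key2 : ∑ a ∈ Icc 1 n, ((2:ℤ)^(a-1) * T a - 2^a * T (a+1))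
        = (2:ℤ)^0 * T (0+1) - (2:ℤ)^n * T (n+1) := by
      rw [← Finset.sum_range_sub' (fun b => (2:ℤ)^b * T (b+1)) n]
      rw [← Finset.Ico_add_one_right_eq_Icc, Finset.sum_Ico_eq_sum_range]
      simp only [Nat.add_sub_cancel]
      apply Finset.sum_congr rfl
      intro x _
      have e1 : 1 + x - 1 = x := by omega
      have e2 : 1 + x = x + 1 := by omega
      rw [e1, e2]
    rw [key2, hTzero]
    simp only [pow_zero, one_mul, mul_zero, sub_zero, hT]
    apply Finset.sum_congr rfl
    intro j _
    norm_num
  rw [hL, hR, hR2, hTel]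
end

section
/- Let p be a prime number and n a natural number. The p-Glaisher map, which sends a p-regular partition λ of n to the partition obtained by replacing each part λ_i = p^{a_i}·q_i (with q_i not divisible by p) by p^{a_i} copies of q_i, is a bijection from the set P^{r(p)}(n) of p-regular partitions of n onto the set P^{c(p)}(n) of p-class regular partitions of n. -/
lemma gl0 (p : ℕ) : glaisher p 0 = 0 := rfl

lemma gladd (p : ℕ) (a b : Multiset ℕ) : glaisher p (a + b) = glaisher p a + glaisher p b :=
  Multiset.add_bind a b _

lemma glcons (p x : ℕ) (s : Multiset ℕ) :
    glaisher p (x ::ₘ s) = Multiset.replicate (p ^ (Nat.factorization x p)) (x / p ^ (Nat.factorization x p)) + glaisher p s :=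
  Multiset.cons_bind x s _

lemma glsum (p : ℕ) (s : Multiset ℕ) : (glaisher p s).sum = s.sum := by
  induction s using Multiset.induction with
  | empty => rfl
  | cons x s ih =>
      rw [glcons, Multiset.sum_add, ih, Multiset.sum_cons, Multiset.sum_replicate,
        smul_eq_mul, Nat.ordProj_mul_ordCompl_eq_self]

lemma glrepl (p k x : ℕ) :
    glaisher p (Multiset.replicate k x) =
      Multiset.replicate (k * p ^ (Nat.factorization x p)) (x / p ^ (Nat.factorization x p)) := by
  induction k with
  | zero => rw [Multiset.replicate_zero, Nat.zero_mul, Multiset.replicate_zero]; rfl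
  | succ k ih =>
      rw [Multiset.replicate_succ, glcons, ih, Nat.succ_mul, add_comm (k * _),
        Multiset.replicate_add]

lemma fact_pow_mul {p q : ℕ} (hp : p.Prime) (hq : ¬ p ∣ q) (a : ℕ) :
    Nat.factorization (p ^ a * q) p = a := by
  have hq0 : q ≠ 0 := by rintro rfl; exact hq (dvd_zero p)
  rw [Nat.factorization_mul (pow_ne_zero a hp.ne_zero) hq0]
  simp [hp.factorization_pow, Nat.factorization_eq_zero_of_not_dvd hq]

lemma div_pow_mul {p q : ℕ} (hp : p.Prime) (a : ℕ) : (p ^ a * q) / p ^ a = q :=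
  Nat.mul_div_cancel_left q (pow_pos hp.pos a)

lemma pow_mul_inj {p q : ℕ} (hp : p.Prime) (hq0 : 0 < q) {a b : ℕ}
    (h : p ^ a * q = p ^ b * q) : a = b :=
  Nat.pow_right_injective hp.two_le (Nat.eq_of_mul_eq_mul_right hq0 h)

lemma countgl {p : ℕ} (hp : p.Prime) {q : ℕ} (hq0 : 0 < q) (hq : ¬ p ∣ q)
    (s : Multiset ℕ) (K : ℕ) (hK : ∀ x ∈ s, x < p ^ K) :
    (glaisher p s).count q = ∑ a ∈ Finset.range K, p ^ a * s.count (p ^ a * q) := by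
  induction s using Multiset.induction with
  | empty => simp [gl0]
  | cons x s ih =>
      have hx : x < p ^ K := hK x (Multiset.mem_cons_self x s)
      have ihs := ih (fun y hy => hK y (Multiset.mem_cons_of_mem hy))
      rw [glcons, Multiset.count_add, ihs]
      have key : (Multiset.replicate (p ^ (Nat.factorization x p))
          (x / p ^ (Nat.factorization x p))).count q
          = ∑ a ∈ Finset.range K, p ^ a * (if p ^ a * q = x then 1 else 0) := by
        by_cases hcase : x / p ^ (Nat.factorization x p) = q
        · have hx0 : x ≠ 0 := by
            rintro rfl
            simp at hcase; omega
          set b := Nat.factorization x p with hb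
          have hxb : p ^ b * q = x := by
            rw [← hcase]; exact Nat.ordProj_mul_ordCompl_eq_self x p
          have hbK : b < K := by
            have h1 : p ^ b ≤ p ^ b * q := Nat.le_mul_of_pos_right _ hq0
            have : p ^ b < p ^ K := lt_of_le_of_lt (hxb ▸ h1) hx
            exact (pow_lt_pow_iff_right₀ hp.one_lt).mp this
          rw [Multiset.count_replicate, if_pos hcase]
          rw [Finset.sum_eq_single_of_mem b (Finset.mem_range.mpr hbK)]
          · rw [if_pos hxb, mul_one]
          · intro a _ hab
            rw [if_neg, mul_zero]
            intro h
            exact hab (pow_mul_inj hp hq0 (h.trans hxb.symm))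
        · rw [Multiset.count_replicate, if_neg hcase]
          symm
          apply Finset.sum_eq_zero
          intro a _
          rw [if_neg, mul_zero]
          rintro rfl
          exact hcase (by rw [fact_pow_mul hp hq, div_pow_mul hp])
      rw [key, ← Finset.sum_add_distrib]
      apply Finset.sum_congr rfl
      intro a _
      rw [Multiset.count_cons, mul_add, add_comm]

lemma digits_sum {p : ℕ} (hp : 1 < p) :
    ∀ K m, m < p ^ K → ∑ a ∈ Finset.range K, p ^ a * (m / p ^ a % p) = m := by
  intro K
  induction K with
  | zero => intro m hm; simp at hm ⊢; omega
  | succ K ih =>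
      intro m hm
      rw [Finset.sum_range_succ']
      have h1 : ∀ a : ℕ, p ^ (a + 1) * (m / p ^ (a + 1) % p)
          = p * (p ^ a * ((m / p) / p ^ a % p)) := by
        intro a
        have hdiv : m / p ^ (a + 1) = m / p / p ^ a := by
          rw [Nat.div_div_eq_div_mul, ← pow_succ']
        rw [hdiv, pow_succ', mul_assoc]
      calc ∑ a ∈ Finset.range K, p ^ (a+1) * (m / p ^ (a+1) % p) + p ^ 0 * (m / p ^ 0 % p)
          = p * (∑ a ∈ Finset.range K, p ^ a * ((m / p) / p ^ a % p)) + m % p := by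
            rw [Finset.mul_sum]
            simp only [pow_zero, one_mul, Nat.div_one]
            congr 1
            exact Finset.sum_congr rfl (fun a _ => h1 a)
        _ = m := by
            rw [ih (m / p) (Nat.div_lt_of_lt_mul (by rw [← pow_succ']; exact hm))]
            exact Nat.div_add_mod m p

lemma digits_unique {p : ℕ} (hp : 1 < p) :
    ∀ K (c c' : ℕ → ℕ), (∀ a, c a < p) → (∀ a, c' a < p) →
      (∑ a ∈ Finset.range K, p ^ a * c a = ∑ a ∈ Finset.range K, p ^ a * c' a) →
      ∀ a, a < K → c a = c' a := by
  intro K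
  induction K with
  | zero => intro _ _ _ _ _ a ha; omega
  | succ K ih =>
      intro c c' hc hc' heq a ha
      rw [Finset.sum_range_succ', Finset.sum_range_succ'] at heq
      have h1 : ∀ (d : ℕ → ℕ), (∀ a, d a < p) →
          ∑ a ∈ Finset.range K, p ^ (a+1) * d (a+1) + p ^ 0 * d 0
          = p * (∑ a ∈ Finset.range K, p ^ a * d (a+1)) + d 0 := by
        intro d hd
        rw [Finset.mul_sum, pow_zero, one_mul]
        congr 1
        refine Finset.sum_congr rfl (fun b _ => ?_)
        rw [pow_succ, mul_comm (p ^ b) p, mul_assoc]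
      rw [h1 c hc, h1 c' hc'] at heq
      have hc0 : c 0 = c' 0 := by
        have := congrArg (· % p) heq
        rwa [Nat.mul_add_mod, Nat.mul_add_mod, Nat.mod_eq_of_lt (hc 0),
          Nat.mod_eq_of_lt (hc' 0)] at this
      have hM : ∑ b ∈ Finset.range K, p ^ b * c (b+1) = ∑ b ∈ Finset.range K, p ^ b * c' (b+1) := by
        have hp0 : 0 < p := by omega
        have := congrArg (· / p) heq
        rw [Nat.mul_add_div hp0, Nat.mul_add_div hp0,
          Nat.div_eq_of_lt (hc 0), Nat.div_eq_of_lt (hc' 0)] at this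
        omega
      rcases a with _ | a
      · exact hc0
      · exact ih (fun b => c (b+1)) (fun b => c' (b+1)) (fun b => hc _) (fun b => hc' _) hM a
          (by omega)

lemma gl0' : ∀ p, glaisher p 0 = 0 := gl0

lemma glfinsum (p : ℕ) {α : Type*} (F : Finset α) (f : α → Multiset ℕ) :
    glaisher p (∑ a ∈ F, f a) = ∑ a ∈ F, glaisher p (f a) := by
  classical
  induction F using Finset.induction with
  | empty => exact gl0 p
  | @insert a s h ih => rw [Finset.sum_insert h, Finset.sum_insert h, gladd, ih]

lemma sum_replicate_finset {α : Type*} (F : Finset α) (g : α → ℕ) (x : ℕ) :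
    ∑ a ∈ F, Multiset.replicate (g a) x = Multiset.replicate (∑ a ∈ F, g a) x := by
  classical
  induction F using Finset.induction with
  | empty => simp
  | @insert a s h ih =>
      rw [Finset.sum_insert h, Finset.sum_insert h, ih, Multiset.replicate_add]

lemma exists_preimage {p : ℕ} (hp : p.Prime) (t : Multiset ℕ)
    (ht : ∀ x ∈ t, 0 < x ∧ ¬ p ∣ x) :
    ∃ s : Multiset ℕ, (∀ x ∈ s, 0 < x) ∧ (∀ i, s.count i < p) ∧ glaisher p s = t := by
  induction t using Multiset.strongInductionOn with
  | _ t ih => ?_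
  by_cases h0 : t = 0
  · exact ⟨0, by simp, fun i => by simpa using hp.pos, by rw [gl0, h0]⟩
  obtain ⟨q, hq⟩ := Multiset.exists_mem_of_ne_zero h0
  have hq0 : 0 < q := (ht q hq).1
  have hqd : ¬ p ∣ q := (ht q hq).2
  set m := t.count q with hm
  set t' := t.filter (fun x => ¬ x = q) with ht'
  have hdecomp : Multiset.replicate m q + t' = t := by
    rw [hm, ← Multiset.filter_eq' t q, ht']
    exact Multiset.filter_add_not _ t
  have hq_not : q ∉ t' := by
    rw [ht', Multiset.mem_filter]
    tauto
  have hlt : t' < t := by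
    refine lt_of_le_of_ne (Multiset.filter_le _ t) (fun h => hq_not (h ▸ hq))
  obtain ⟨s', hs'pos, hs'reg, hs'g⟩ :=
    ih t' hlt (fun x hx => ht x (Multiset.mem_of_mem_filter hx))
  set B := ∑ a ∈ Finset.range m, Multiset.replicate (m / p ^ a % p) (p ^ a * q) with hB
  have hglB : glaisher p B = Multiset.replicate m q := by
    rw [hB, glfinsum]
    have hterm : ∀ a ∈ Finset.range m,
        glaisher p (Multiset.replicate (m / p ^ a % p) (p ^ a * q))
          = Multiset.replicate (p ^ a * (m / p ^ a % p)) q := by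
      intro a _
      rw [glrepl, fact_pow_mul hp hqd, div_pow_mul hp, mul_comm]
    rw [Finset.sum_congr rfl hterm, sum_replicate_finset,
      digits_sum hp.one_lt m m (Nat.lt_pow_self (n := m) hp.one_lt)]
  have hcB : ∀ i, B.count i
      = ∑ a ∈ Finset.range m, (if p ^ a * q = i then m / p ^ a % p else 0) := by
    intro i
    rw [hB, Multiset.count_sum']
    exact Finset.sum_congr rfl (fun a _ => Multiset.count_replicate _ _ _)
  refine ⟨s' + B, ?_, ?_, ?_⟩
  · intro x hx
    rcases Multiset.mem_add.mp hx with h | h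
    · exact hs'pos x h
    · obtain ⟨a, _, hmem⟩ := Multiset.mem_sum.mp h
      rw [Multiset.eq_of_mem_replicate hmem]
      exact Nat.mul_pos (pow_pos hp.pos a) hq0
  · intro i
    rw [Multiset.count_add]
    by_cases hcase : ∃ a, a < m ∧ i = p ^ a * q
    · obtain ⟨a, haK, rfl⟩ := hcase
      have h0' : s'.count (p ^ a * q) = 0 := by
        rw [Multiset.count_eq_zero]
        intro hmem
        apply hq_not
        rw [← hs'g]
        refine Multiset.mem_bind.mpr ⟨p ^ a * q, hmem, ?_⟩
        rw [fact_pow_mul hp hqd, div_pow_mul hp]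
        exact Multiset.mem_replicate.mpr ⟨(pow_pos hp.pos a).ne', rfl⟩
      rw [h0', hcB, Finset.sum_eq_single_of_mem a (Finset.mem_range.mpr haK)]
      · rw [if_pos rfl, zero_add]
        exact Nat.mod_lt _ hp.pos
      · intro b _ hba
        rw [if_neg]
        intro h
        exact hba (pow_mul_inj hp hq0 h)
    · have hz : B.count i = 0 := by
        rw [hcB]
        apply Finset.sum_eq_zero
        intro a ha
        rw [if_neg]
        intro h
        exact hcase ⟨a, Finset.mem_range.mp ha, h.symm⟩
      rw [hz, add_zero]
      exact hs'reg i
  · rw [gladd, hs'g, hglB, add_comm]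
    exact hdecomp

/-- The `p`-Glaisher map is a bijection from `p`-regular partitions of `n` onto
`p`-class regular partitions of `n`. -/
theorem stmt14 (p : ℕ) (hp : p.Prime) (n : ℕ) :
    Set.BijOn (glaisher p) {s : Multiset ℕ | IsPartitionOf n s ∧ ∀ i, s.count i < p}
      {s : Multiset ℕ | IsPartitionOf n s ∧ ∀ x ∈ s, ¬ p ∣ x} := by
  refine ⟨?_, ?_, ?_⟩
  · rintro s ⟨⟨hpos, hsum⟩, hreg⟩
    refine ⟨⟨?_, ?_⟩, ?_⟩
    · intro y hy
      obtain ⟨x, hxs, hyx⟩ := Multiset.mem_bind.mp hy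
      rw [Multiset.eq_of_mem_replicate hyx]
      exact Nat.ordCompl_pos p (hpos x hxs).ne'
    · rw [glsum, hsum]
    · intro y hy
      obtain ⟨x, hxs, hyx⟩ := Multiset.mem_bind.mp hy
      rw [Multiset.eq_of_mem_replicate hyx]
      exact Nat.not_dvd_ordCompl hp (hpos x hxs).ne'
  · rintro s1 ⟨⟨h1pos, h1sum⟩, h1reg⟩ s2 ⟨⟨h2pos, h2sum⟩, h2reg⟩ heq
    ext x
    rcases Nat.eq_zero_or_pos x with rfl | hx
    · rw [Multiset.count_eq_zero_of_notMem (fun h => lt_irrefl 0 (h1pos 0 h)),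
        Multiset.count_eq_zero_of_notMem (fun h => lt_irrefl 0 (h2pos 0 h))]
    · set a := Nat.factorization x p with ha
      set q := x / p ^ a with hqdef
      have hxa : p ^ a * q = x := Nat.ordProj_mul_ordCompl_eq_self x p
      have hq0 : 0 < q := Nat.ordCompl_pos p hx.ne'
      have hqd : ¬ p ∣ q := Nat.not_dvd_ordCompl hp hx.ne'
      set K := n + a + 1 with hK
      have hnK : n < p ^ K :=
        lt_of_lt_of_le (Nat.lt_pow_self (n := n) hp.one_lt)
          (Nat.pow_le_pow_right hp.pos (by omega))
      have hb1 : ∀ y ∈ s1, y < p ^ K :=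
        fun y hy => lt_of_le_of_lt (h1sum ▸ Multiset.le_sum_of_mem hy) hnK
      have hb2 : ∀ y ∈ s2, y < p ^ K :=
        fun y hy => lt_of_le_of_lt (h2sum ▸ Multiset.le_sum_of_mem hy) hnK
      have e1 := countgl hp hq0 hqd s1 K hb1
      have e2 := countgl hp hq0 hqd s2 K hb2
      rw [heq, e2] at e1
      have := digits_unique hp.one_lt K (fun b => s2.count (p ^ b * q))
        (fun b => s1.count (p ^ b * q)) (fun b => h2reg _) (fun b => h1reg _)
        e1 a (by omega)
      rw [← hxa]
      exact this.symm
  · rintro t ⟨⟨hpos, hsum⟩, hdvd⟩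
    obtain ⟨s, hspos, hsreg, hsg⟩ :=
      exists_preimage hp t (fun x hx => ⟨hpos x hx, hdvd x hx⟩)
    exact ⟨s, ⟨⟨hspos, by rw [← glsum p s, hsg, hsum]⟩, hsreg⟩, hsg⟩
end

section
/- For every natural number n, the number of partitions of n equals Σ_{n₀ + 2n₁ = n} |SP(n₀)| · |P(n₁)|, where the sum runs over all pairs of natural numbers (n₀, n₁) with n₀ + 2n₁ = n, SP(n₀) is the set of strict partitions of n₀, and P(n₁) is the set of partitions of n₁. Moreover, for each fixed (n₀, n₁), the number of partitions λ of n with |λ^r| = n₀ and |λ^d| = n₁ equals |SP(n₀)| · |P(n₁)|. -/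
lemma decomp (s : Multiset ℕ) : rPart s + 2 • dPart s = s := by
  ext i
  rw [Multiset.count_add, Multiset.count_nsmul, count_rPart, count_dPart]
  omega

lemma rPart_combine (σ τ : Multiset ℕ) (h : σ.Nodup) : rPart (σ + 2 • τ) = σ := by
  ext i
  rw [count_rPart, Multiset.count_add, Multiset.count_nsmul]
  have := Multiset.nodup_iff_count_le_one.mp h i
  omega

lemma dPart_combine (σ τ : Multiset ℕ) (h : σ.Nodup) : dPart (σ + 2 • τ) = τ := by
  ext i
  rw [count_dPart, Multiset.count_add, Multiset.count_nsmul]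
  have := Multiset.nodup_iff_count_le_one.mp h i
  omega

lemma mem_of_mem_rPart {i : ℕ} {s : Multiset ℕ} (h : i ∈ rPart s) : i ∈ s := by
  rw [rPart, Multiset.mem_filter, Multiset.mem_dedup] at h
  exact h.1

lemma mem_of_mem_dPart {i : ℕ} {s : Multiset ℕ} (h : i ∈ dPart s) : i ∈ s := by
  rw [← Multiset.count_pos] at h ⊢
  rw [count_dPart] at h
  omega

lemma sum_decomp (s : Multiset ℕ) : (rPart s).sum + 2 * (dPart s).sum = s.sum := by
  conv_rhs => rw [← decomp s]
  rw [Multiset.sum_add, two_nsmul, Multiset.sum_add]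
  ring

/-- `|P(n)| = Σ_{n₀ + 2n₁ = n} |SP(n₀)| ⬝ |P(n₁)|`, and for each fixed `(n₀, n₁)` the number
of `λ ∈ P(n)` with `|λ^r| = n₀` and `|λ^d| = n₁` equals `|SP(n₀)| ⬝ |P(n₁)|`. -/
theorem stmt16 (n : ℕ) :
    (Fintype.card (Nat.Partition n) =
      ∑ q ∈ (Finset.range (n + 1) ×ˢ Finset.range (n + 1)).filter
          (fun q => q.1 + 2 * q.2 = n),
        (Nat.Partition.distincts q.1).card * Fintype.card (Nat.Partition q.2)) ∧
    (∀ n₀ n₁ : ℕ, n₀ + 2 * n₁ = n →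
      (Finset.univ.filter (fun μ : Nat.Partition n =>
          (rPart μ.parts).sum = n₀ ∧ (dPart μ.parts).sum = n₁)).card =
        (Nat.Partition.distincts n₀).card * Fintype.card (Nat.Partition n₁)) := by
  have key : ∀ n₀ n₁ : ℕ, n₀ + 2 * n₁ = n →
      (Finset.univ.filter (fun μ : Nat.Partition n =>
          (rPart μ.parts).sum = n₀ ∧ (dPart μ.parts).sum = n₁)).card =
        (Nat.Partition.distincts n₀).card * Fintype.card (Nat.Partition n₁) := by
    intro n₀ n₁ hn
    rw [Fintype.card, ← Finset.card_product]
    refine Finset.card_bij'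
      (i := fun μ hμ =>
        (⟨rPart μ.parts, fun hj => μ.parts_pos (mem_of_mem_rPart hj),
          ((Finset.mem_filter.mp hμ).2).1⟩,
         ⟨dPart μ.parts, fun hj => μ.parts_pos (mem_of_mem_dPart hj),
          ((Finset.mem_filter.mp hμ).2).2⟩))
      (j := fun p hp =>
        ⟨p.1.parts + 2 • p.2.parts, by
          intro i hi
          rw [Multiset.mem_add] at hi
          rcases hi with hi | hi
          · exact p.1.parts_pos hi
          · rw [two_nsmul, Multiset.mem_add] at hi
            rcases hi with hi | hi <;> exact p.2.parts_pos hi, by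
          rw [Multiset.sum_add, two_nsmul, Multiset.sum_add, p.1.parts_sum, p.2.parts_sum]
          omega⟩) ?_ ?_ ?_ ?_
    · intro μ hμ
      refine Finset.mem_product.mpr ⟨?_, Finset.mem_univ _⟩
      simp only [Nat.Partition.distincts, Finset.mem_filter, Finset.mem_univ, true_and]
      exact Multiset.Nodup.filter _ μ.parts.nodup_dedup
    · intro p hp
      simp only [Finset.mem_filter, Finset.mem_univ, true_and]
      have hnd : p.1.parts.Nodup := by
        have := (Finset.mem_product.mp hp).1
        simpa [Nat.Partition.distincts] using this
      constructor
      · rw [rPart_combine _ _ hnd, p.1.parts_sum]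
      · rw [dPart_combine _ _ hnd, p.2.parts_sum]
    · intro μ hμ
      apply Nat.Partition.ext
      exact decomp μ.parts
    · intro p hp
      have hnd : p.1.parts.Nodup := by
        have := (Finset.mem_product.mp hp).1
        simpa [Nat.Partition.distincts] using this
      refine Prod.ext (Nat.Partition.ext ?_) (Nat.Partition.ext ?_)
      · exact rPart_combine _ _ hnd
      · exact dPart_combine _ _ hnd
  refine ⟨?_, key⟩
  rw [Fintype.card]
  rw [Finset.card_eq_sum_card_fiberwise
    (f := fun μ : Nat.Partition n => ((rPart μ.parts).sum, (dPart μ.parts).sum))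
    (t := (Finset.range (n + 1) ×ˢ Finset.range (n + 1)).filter
          (fun q => q.1 + 2 * q.2 = n)) ?_]
  · apply Finset.sum_congr rfl
    intro q hq
    have hq' := (Finset.mem_filter.mp hq).2
    rw [← key q.1 q.2 hq']
    congr 1
    apply Finset.filter_congr
    intro μ _
    simp [Prod.ext_iff]
  · intro μ _
    have hs := sum_decomp μ.parts
    rw [μ.parts_sum] at hs
    simp only [Finset.mem_coe, Finset.mem_filter, Finset.mem_product, Finset.mem_range]
    omega
end

section
/- Let p be a prime number and n a natural number. Then the number of partitions of n equals Σ_{n₀ + p·n₁ = n} |P^{r(p)}(n₀)| · |P(n₁)|, where the sum runs over all pairs of natural numbers (n₀, n₁) with n₀ + p·n₁ = n, P^{r(p)}(n₀) is the set of p-regular partitions of n₀, and P(n₁) is the set of partitions of n₁. -/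
section stmt17helpers

lemma count_sum_repl (s : Multiset ℕ) (f : ℕ → ℕ) (hf : f 0 = 0) (j : ℕ) :
    Multiset.count j (∑ i ∈ s.toFinset, Multiset.replicate (f (s.count i)) i)
      = f (s.count j) := by
  rw [Multiset.count_sum']
  simp only [Multiset.count_replicate]
  rw [Finset.sum_ite_eq' s.toFinset j (fun i => f (s.count i))]
  split_ifs with h
  · rfl
  · rw [Multiset.count_eq_zero_of_notMem (by simpa using h), hf]

lemma count_rPartP (p : ℕ) (s : Multiset ℕ) (j : ℕ) :
    (rPartP p s).count j = s.count j % p :=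
  count_sum_repl s (· % p) (Nat.zero_mod p) j

lemma count_dPartP (p : ℕ) (s : Multiset ℕ) (j : ℕ) :
    (dPartP p s).count j = s.count j / p :=
  count_sum_repl s (· / p) (Nat.zero_div p) j

lemma rPartP_add_nsmul_dPartP (p : ℕ) (s : Multiset ℕ) :
    rPartP p s + p • dPartP p s = s := by
  ext j
  rw [Multiset.count_add, Multiset.count_nsmul, count_rPartP, count_dPartP,
    Nat.mod_add_div]

lemma nsmul_msum (p : ℕ) (s : Multiset ℕ) : (p • s).sum = p * s.sum := by
  induction p with
  | zero => simp
  | succ k ih => rw [succ_nsmul, Multiset.sum_add, ih, Nat.succ_mul]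

lemma mem_of_mem_rPartP {p : ℕ} {s : Multiset ℕ} {i : ℕ} (h : i ∈ rPartP p s) : i ∈ s := by
  rw [← Multiset.count_pos] at h ⊢
  rw [count_rPartP] at h
  have := Nat.mod_le (s.count i) p
  omega

lemma mem_of_mem_dPartP {p : ℕ} {s : Multiset ℕ} {i : ℕ} (h : i ∈ dPartP p s) : i ∈ s := by
  rw [← Multiset.count_pos] at h ⊢
  rw [count_dPartP] at h
  have := Nat.div_le_self (s.count i) p
  omega

lemma sigma_eq {a₁ a₂ b₁ b₂ : ℕ} (μ : Nat.Partition a₁) (ν : Nat.Partition a₂)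
    (μ' : Nat.Partition b₁) (ν' : Nat.Partition b₂)
    (h1 : μ.parts = μ'.parts) (h2 : ν.parts = ν'.parts) :
    (⟨(a₁, a₂), (μ, ν)⟩ : Σ q : ℕ × ℕ, Nat.Partition q.1 × Nat.Partition q.2)
      = ⟨(b₁, b₂), (μ', ν')⟩ := by
  obtain rfl : a₁ = b₁ := by rw [← μ.parts_sum, ← μ'.parts_sum, h1]
  obtain rfl : a₂ = b₂ := by rw [← ν.parts_sum, ← ν'.parts_sum, h2]
  obtain rfl : μ = μ' := by ext1; exact h1
  obtain rfl : ν = ν' := by ext1; exact h2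
  rfl

/-- Forward map of the bijection. -/
def toSigP (p n : ℕ) (lam : Nat.Partition n) :
    Σ q : ℕ × ℕ, Nat.Partition q.1 × Nat.Partition q.2 :=
  ⟨((rPartP p lam.parts).sum, (dPartP p lam.parts).sum),
    ⟨⟨rPartP p lam.parts, fun hi => lam.parts_pos (mem_of_mem_rPartP hi), rfl⟩,
     ⟨dPartP p lam.parts, fun hi => lam.parts_pos (mem_of_mem_dPartP hi), rfl⟩⟩⟩

/-- Backward map of the bijection. -/
def fromPairP (p n : ℕ) {a b : ℕ} (μ : Nat.Partition a) (ν : Nat.Partition b)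
    (h : a + p * b = n) : Nat.Partition n where
  parts := μ.parts + p • ν.parts
  parts_pos := by
    intro i hi
    rcases Multiset.mem_add.mp hi with h' | h'
    · exact μ.parts_pos h'
    · exact ν.parts_pos (Multiset.mem_nsmul.mp h').2
  parts_sum := by
    rw [Multiset.sum_add, nsmul_msum, μ.parts_sum, ν.parts_sum, h]

end stmt17helpers

/-- `|P(n)| = Σ_{n₀ + p n₁ = n} |P^{r(p)}(n₀)| ⬝ |P(n₁)|`, where `P^{r(p)}(n₀)` is the set of
`p`-regular partitions of `n₀`. -/
theorem stmt17 (p : ℕ) (hp : p.Prime) (n : ℕ) :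
    Fintype.card (Nat.Partition n) =
      ∑ q ∈ (Finset.range (n + 1) ×ˢ Finset.range (n + 1)).filter
          (fun q => q.1 + p * q.2 = n),
        (Finset.univ.filter (fun μ : Nat.Partition q.1 =>
            ∀ i ∈ μ.parts, μ.parts.count i < p)).card
          * Fintype.card (Nat.Partition q.2) := by
  have hp0 : 0 < p := hp.pos
  classical
  set Q := (Finset.range (n + 1) ×ˢ Finset.range (n + 1)).filter
      (fun q => q.1 + p * q.2 = n) with hQ
  have key : Fintype.card (Nat.Partition n) =
      (Q.sigma (fun q => (Finset.univ.filter (fun μ : Nat.Partition q.1 =>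
        ∀ i ∈ μ.parts, μ.parts.count i < p)) ×ˢ
          (Finset.univ : Finset (Nat.Partition q.2)))).card := by
    rw [← Finset.card_univ]
    refine Finset.card_bij' (fun lam _ => toSigP p n lam)
      (fun b hb => fromPairP p n b.2.1 b.2.2
        (Finset.mem_filter.mp (Finset.mem_sigma.mp hb).1).2) ?_ ?_ ?_ ?_
    · intro lam _
      dsimp only [toSigP]
      have hsum : (rPartP p lam.parts).sum + p * (dPartP p lam.parts).sum = n := by
        have := congrArg Multiset.sum (rPartP_add_nsmul_dPartP p lam.parts)
        rwa [Multiset.sum_add, nsmul_msum, lam.parts_sum] at this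
      have hd : (dPartP p lam.parts).sum ≤ p * (dPartP p lam.parts).sum :=
        Nat.le_mul_of_pos_left _ hp0
      refine Finset.mem_sigma.mpr ⟨Finset.mem_filter.mpr
        ⟨Finset.mem_product.mpr
          ⟨Finset.mem_range.mpr (show (rPartP p lam.parts).sum < n + 1 by omega),
          Finset.mem_range.mpr (show (dPartP p lam.parts).sum < n + 1 by omega)⟩,
          show (rPartP p lam.parts).sum + p * (dPartP p lam.parts).sum = n from hsum⟩, ?_⟩
      refine Finset.mem_product.mpr ⟨Finset.mem_filter.mpr ⟨Finset.mem_univ _, ?_⟩,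
        Finset.mem_univ _⟩
      intro i _
      show (rPartP p lam.parts).count i < p
      rw [count_rPartP]
      exact Nat.mod_lt _ hp0
    · intro b hb
      exact Finset.mem_univ _
    · intro lam _
      ext1
      exact rPartP_add_nsmul_dPartP p lam.parts
    · rintro ⟨⟨a, b⟩, μ, ν⟩ hb
      have hreg : ∀ i ∈ μ.parts, μ.parts.count i < p :=
        (Finset.mem_filter.mp (Finset.mem_product.mp (Finset.mem_sigma.mp hb).2).1).2
      have hcnt : ∀ j, μ.parts.count j < p := by
        intro j
        by_cases hj : j ∈ μ.parts
        · exact hreg j hj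
        · rw [Multiset.count_eq_zero_of_notMem hj]; exact hp0
      have h1 : rPartP p (μ.parts + p • ν.parts) = μ.parts := by
        ext j
        rw [count_rPartP, Multiset.count_add, Multiset.count_nsmul,
          Nat.add_mul_mod_self_left, Nat.mod_eq_of_lt (hcnt j)]
      have h2 : dPartP p (μ.parts + p • ν.parts) = ν.parts := by
        ext j
        rw [count_dPartP, Multiset.count_add, Multiset.count_nsmul,
          Nat.add_mul_div_left _ _ hp0, Nat.div_eq_of_lt (hcnt j), Nat.zero_add]
      exact sigma_eq _ _ _ _ h1 h2
  rw [key, Finset.card_sigma]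
  exact Finset.sum_congr rfl fun q _ => by
    rw [Finset.card_product, Finset.card_univ]
end
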